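/- arXiv:1812.01453 — 6 statements merged into one kernel-verified Lean document; each statement's English description precedes it below -/
import Mathlib

section
/- Let X and A be complex numbers such that A is not an odd multiple of π/2 (equivalently, cos A ≠ 0). Then cos(X+A)/cos(A) = ∏_{k=1}^∞ (1 − X/((k−1/2)π − A))·(1 + X/((k−1/2)π + A)), where the infinite product converges. -/
open Filter Finset Complex Real Topology

noncomputable def Rf (n m : ℕ) : ℂ := ∏ k ∈ Finset.range n, (1 - (m:ℂ)^2 / ((k:ℂ) + 1/2)^2)
noncomputable def Nf (n m : ℕ) : ℂ := ∏ k ∈ Finset.range n, (((k:ℂ) + 1/2)^2 - (m:ℂ)^2)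
noncomputable def Df (n : ℕ) : ℂ := ∏ k ∈ Finset.range n, ((k:ℂ) + 1/2)^2

lemma half_ne (n : ℕ) : ((n:ℂ) + 1/2) ≠ 0 := by
  have h : ((n:ℂ) + 1/2) = (((n:ℝ) + 1/2 : ℝ) : ℂ) := by push_cast; ring
  rw [h, Complex.ofReal_ne_zero]
  positivity

lemma Df_ne (n : ℕ) : Df n ≠ 0 :=
  Finset.prod_ne_zero_iff.mpr fun k _ => pow_ne_zero _ (half_ne k)

lemma odd_ne (n m : ℕ) : (2*(n:ℂ) - 2*m - 1) ≠ 0 := by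
  have h : ((2*(n:ℤ) - 2*m - 1 : ℤ) : ℂ) ≠ 0 := Int.cast_ne_zero.mpr (by omega)
  intro hh; apply h; push_cast; linear_combination hh

lemma RfNf (n m : ℕ) : Rf n m * Df n = Nf n m := by
  rw [Rf, Df, Nf, ← Finset.prod_mul_distrib]
  refine Finset.prod_congr rfl fun k _ => ?_
  rw [sub_mul, one_mul, div_mul_cancel₀ _ (pow_ne_zero 2 (half_ne k))]

lemma Nf_key (n m : ℕ) :
    Nf n (m+1) * (2*(n:ℂ) - 2*m - 1) = -(Nf n m * (2*(n:ℂ) + 2*m + 1)) := by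
  induction n with
  | zero => simp [Nf]; ring
  | succ n ih =>
    simp only [Nf, Finset.prod_range_succ] at ih ⊢
    push_cast at ih ⊢
    linear_combination ((2*(n:ℂ)+2*(m:ℂ)+3)*(2*(n:ℂ)-2*(m:ℂ)+1)/4) * ih

lemma Rf_key (n m : ℕ) :
    Rf n (m+1) * (2*(n:ℂ) - 2*m - 1) = -(Rf n m * (2*(n:ℂ) + 2*m + 1)) := by
  have h1 := RfNf n (m+1)
  have h2 := RfNf n m
  have h3 := Nf_key n m
  apply mul_right_cancel₀ (Df_ne n)
  push_cast at h1 ⊢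
  linear_combination (2*(n:ℂ)-2*(m:ℂ)-1) * h1 + (2*(n:ℂ)+2*(m:ℂ)+1) * h2 + h3

lemma Rf_closed (n m : ℕ) :
    Rf n m = (-1)^m * ∏ j ∈ Finset.range m, ((2*(n:ℂ)+2*j+1)/(2*(n:ℂ)-2*j-1)) := by
  induction m with
  | zero => simp [Rf]
  | succ m ih =>
    have h1 : Rf n (m+1) = -(Rf n m * (2*(n:ℂ) + 2*m + 1)) / (2*(n:ℂ) - 2*m - 1) :=
      eq_div_of_mul_eq (odd_ne n m) (Rf_key n m)
    rw [h1, ih, Finset.prod_range_succ, pow_succ]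
    field_simp

lemma inv_nat_tendsto : Tendsto (fun n : ℕ => ((n:ℂ))⁻¹) atTop (𝓝 0) :=
  tendsto_inv_atTop_nhds_zero_nat (𝕜 := ℂ)

lemma tendsto_fac (j : ℕ) :
    Tendsto (fun n : ℕ => (2*(n:ℂ)+2*j+1)/(2*(n:ℂ)-2*j-1)) atTop (𝓝 1) := by
  set c : ℂ := 2*(j:ℂ)+1 with hc
  have hnum : Tendsto (fun n : ℕ => 2 + c * ((n:ℂ))⁻¹) atTop (𝓝 2) := by
    have := (inv_nat_tendsto.const_mul c).const_add 2
    simpa using this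
  have hden : Tendsto (fun n : ℕ => 2 - c * ((n:ℂ))⁻¹) atTop (𝓝 2) := by
    have := (inv_nat_tendsto.const_mul c).const_sub 2
    simpa using this
  have h := hnum.div hden (two_ne_zero)
  norm_num at h
  refine h.congr' ?_
  filter_upwards [eventually_ge_atTop 1] with n hn
  have hn0 : ((n:ℂ)) ≠ 0 := Nat.cast_ne_zero.mpr (by omega)
  have hd := odd_ne n j
  simp only [Pi.div_apply]
  rw [div_eq_div_iff]
  · field_simp
    ring
  · intro h0
    apply hd
    have : (2 - c * ((n:ℂ))⁻¹) * n = (2*(n:ℂ) - 2*j - 1) := by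
      field_simp [hc]; ring
    rw [← this, h0, zero_mul]
  · exact hd

lemma Rf_tendsto (m : ℕ) : Tendsto (fun n => Rf n m) atTop (𝓝 ((-1)^m)) := by
  have h : Tendsto
      (fun n : ℕ => (-1:ℂ)^m * ∏ j ∈ Finset.range m, ((2*(n:ℂ)+2*j+1)/(2*(n:ℂ)-2*j-1)))
      atTop (𝓝 ((-1:ℂ)^m * ∏ _j ∈ Finset.range m, 1)) :=
    (tendsto_finset_prod _ fun j _ => tendsto_fac j).const_mul _
  rw [Finset.prod_const_one, mul_one] at h
  exact h.congr fun n => (Rf_closed n m).symm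

lemma pi_ne : ((Real.pi : ℂ)) ≠ 0 := Complex.ofReal_ne_zero.mpr Real.pi_ne_zero

lemma cos_nat_pi (M : ℕ) : Complex.cos ((M:ℂ) * Real.pi) = (-1)^M := by
  induction M with
  | zero => simp
  | succ n ih =>
    push_cast
    rw [add_mul, one_mul, Complex.cos_add]
    simp [Complex.sin_nat_mul_pi, Complex.cos_pi, ih, pow_succ]

lemma prod_double (a : ℕ → ℂ) (n : ℕ) :
    ∏ j ∈ Finset.range (2*n), a j = ∏ k ∈ Finset.range n, (a (2*k) * a (2*k+1)) := by
  induction n with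
  | zero => simp
  | succ n ih =>
    rw [Nat.mul_succ, Finset.prod_range_succ, Finset.prod_range_succ, ih,
      Finset.prod_range_succ]
    ring

lemma fact_alg (p w : ℂ) (k : ℕ) (hp : p ≠ 0) :
    (1 - (2*w)^2/((2*(k:ℂ))+1)^2) * (1 - (2*w)^2/((2*(k:ℂ)+1)+1)^2)
      = (1 - (p*w)^2/(((k:ℂ)+1/2)*p)^2) * (1 - w^2/((k:ℂ)+1)^2) := by
  have hk1 : ((k:ℂ) + 1/2) ≠ 0 := half_ne k
  have hk2 : ((k:ℂ) + 1) ≠ 0 := by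
    intro hh
    have hr : ((k:ℝ)+1) ≠ 0 := by positivity
    apply hr
    exact_mod_cast congrArg Complex.re hh
  have hk3 : (2*(k:ℂ) + 1) ≠ 0 := by
    intro hh
    have hr : (2*(k:ℝ)+1) ≠ 0 := by positivity
    apply hr
    exact_mod_cast congrArg Complex.re hh
  have hk4 : ((2*(k:ℂ) + 1) + 1) ≠ 0 := by
    intro hh
    have hr : (2*(k:ℝ)+1+1) ≠ 0 := by positivity
    apply hr
    exact_mod_cast congrArg Complex.re hh
  have e : (p*w)^2/(((k:ℂ)+1/2)*p)^2 = w^2/((k:ℂ)+1/2)^2 := by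
    rw [mul_pow, mul_pow, mul_comm (p^2) (w^2)]
    exact mul_div_mul_right _ _ (pow_ne_zero 2 hp)
  have e1 : (2*w)^2/((2*(k:ℂ))+1)^2 = w^2/((k:ℂ)+1/2)^2 := by
    rw [show ((2*(k:ℂ))+1) = 2*((k:ℂ)+1/2) by ring, mul_pow, mul_pow]
    exact mul_div_mul_left _ _ (by norm_num)
  have e2 : (2*w)^2/((2*(k:ℂ)+1)+1)^2 = w^2/((k:ℂ)+1)^2 := by
    rw [show ((2*(k:ℂ)+1)+1) = 2*((k:ℂ)+1) by ring, mul_pow, mul_pow]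
    exact mul_div_mul_left _ _ (by norm_num)
  rw [e, e1, e2]

lemma cos_prod (z : ℂ) :
    Tendsto (fun n : ℕ => ∏ k ∈ Finset.range n,
      (1 - z^2 / (((k:ℂ) + 1/2) * Real.pi)^2)) atTop (𝓝 (Complex.cos z)) := by
  by_cases hs : Complex.sin z = 0
  · -- z = m * π
    obtain ⟨m, hm⟩ := Complex.sin_eq_zero_iff.mp hs
    set M := m.natAbs with hM
    have hsq : ((M:ℂ))^2 = ((m:ℂ))^2 := by
      have := Int.natAbs_sq m
      exact_mod_cast congrArg (fun t : ℤ => (t : ℂ)) this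
    have hz2 : z^2 = ((M:ℂ))^2 * (Real.pi:ℂ)^2 := by
      rw [hm, hsq]; ring
    have hcz : Complex.cos z = (-1)^M := by
      rcases Int.natAbs_eq m with h | h
      · rw [hm, h, ← hM]; push_cast; exact cos_nat_pi M
      · rw [hm, h, ← hM]; push_cast
        rw [show -(M:ℂ) * Real.pi = -((M:ℂ) * Real.pi) by ring, Complex.cos_neg]
        exact cos_nat_pi M
    rw [hcz]
    refine (Rf_tendsto M).congr fun n => Finset.prod_congr rfl fun k _ => ?_
    congr 1
    rw [hz2, mul_pow]
    rw [mul_div_mul_right _ _ (pow_ne_zero 2 pi_ne)]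
  · -- sin z ≠ 0
    have hz0 : z ≠ 0 := fun h => hs (by simp [h])
    obtain ⟨w, hπw⟩ : ∃ w : ℂ, (Real.pi:ℂ) * w = z :=
      ⟨z / Real.pi, by rw [mul_comm, div_mul_cancel₀ z pi_ne]⟩
    have hw0 : w ≠ 0 := by
      intro h; apply hz0; rw [← hπw, h, mul_zero]
    have hfac : ∀ j : ℕ, (1 - w^2/((j:ℂ)+1)^2) ≠ 0 := by
      intro j h
      apply hs
      have hj : ((j:ℂ)+1) ≠ 0 := by
        intro hh
        have hr : ((j:ℝ)+1) ≠ 0 := by positivity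
        apply hr
        exact_mod_cast congrArg Complex.re hh
      have h2 : w^2 = ((j:ℂ)+1)^2 := by
        field_simp at h
        linear_combination -h
      have h3 : (w - ((j:ℂ)+1)) * (w + ((j:ℂ)+1)) = 0 := by linear_combination h2
      have hsin : Complex.sin (((j:ℂ)+1) * Real.pi) = 0 := by
        have := Complex.sin_nat_mul_pi (j+1)
        push_cast at this
        exact this
      rcases mul_eq_zero.mp h3 with h4 | h4
      · rw [← hπw, sub_eq_zero.mp h4, mul_comm]
        exact hsin
      · rw [← hπw, eq_neg_of_add_eq_zero_left h4,
          show (Real.pi:ℂ) * -((j:ℂ)+1) = -(((j:ℂ)+1) * Real.pi) by ring,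
          Complex.sin_neg, hsin, neg_zero]
    have hgne : ∀ n : ℕ,
        ((Real.pi:ℂ) * w * ∏ j ∈ Finset.range n, (1 - w^2/((j:ℂ)+1)^2)) ≠ 0 := by
      intro n
      exact mul_ne_zero (mul_ne_zero pi_ne hw0)
        (Finset.prod_ne_zero_iff.mpr fun j _ => hfac j)
    have h2n : Tendsto (fun n : ℕ => 2*n) atTop atTop :=
      Filter.tendsto_atTop_atTop.mpr fun b => ⟨b, fun a ha => by omega⟩
    have hf := (Complex.tendsto_euler_sin_prod (2*w)).comp h2n
    have hg := Complex.tendsto_euler_sin_prod w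
    have hkey : ∀ n : ℕ,
        (Real.pi:ℂ) * (2*w) * ∏ j ∈ Finset.range (2*n), (1 - (2*w)^2/((j:ℂ)+1)^2)
          = 2 * ((Real.pi:ℂ) * w * ∏ j ∈ Finset.range n, (1 - w^2/((j:ℂ)+1)^2))
            * ∏ k ∈ Finset.range n, (1 - z^2 / (((k:ℂ) + 1/2) * Real.pi)^2) := by
      intro n
      rw [prod_double]
      have hcong : ∀ k ∈ Finset.range n,
          (1 - (2*w)^2/(((2*k:ℕ):ℂ)+1)^2) * (1 - (2*w)^2/(((2*k+1:ℕ):ℂ)+1)^2)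
            = (1 - z^2 / (((k:ℂ) + 1/2) * Real.pi)^2) * (1 - w^2/((k:ℂ)+1)^2) := by
        intro k _
        have h := fact_alg (Real.pi:ℂ) w k pi_ne
        rw [hπw] at h
        push_cast
        linear_combination h
      rw [Finset.prod_congr rfl hcong, Finset.prod_mul_distrib]
      ring
    have hne2 : (2 * Complex.sin ((Real.pi:ℂ) * w)) ≠ 0 := by
      rw [hπw]; exact mul_ne_zero two_ne_zero hs
    have hdiv := hf.div (hg.const_mul 2) hne2
    have hlim : Complex.sin ((Real.pi:ℂ) * (2*w)) / (2 * Complex.sin ((Real.pi:ℂ) * w))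
        = Complex.cos z := by
      rw [show (Real.pi:ℂ) * (2*w) = 2*((Real.pi:ℂ)*w) by ring, hπw,
        Complex.sin_two_mul]
      exact mul_div_cancel_left₀ _ (mul_ne_zero two_ne_zero hs)
    rw [hlim] at hdiv
    refine hdiv.congr fun n => ?_
    have hne3 : (2 * ((Real.pi:ℂ) * w * ∏ j ∈ Finset.range n, (1 - w^2/((j:ℂ)+1)^2))) ≠ 0 :=
      mul_ne_zero two_ne_zero (hgne n)
    simp only [Pi.div_apply, Function.comp_apply]
    rw [div_eq_iff hne3]
    linear_combination hkey n

lemma ratio_fact (c X A : ℂ) (h1 : c - A ≠ 0) (h2 : c + A ≠ 0) (h3 : c ≠ 0) :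
    (1 - X/(c-A)) * (1 + X/(c+A)) = (1 - (X+A)^2/c^2) / (1 - A^2/c^2) := by
  have hd : (1 - A^2/c^2) ≠ 0 := by
    intro h
    have h' : (c - A) * (c + A) = 0 := by
      have hc2 : c^2 ≠ 0 := pow_ne_zero 2 h3
      field_simp at h
      linear_combination h
    rcases mul_eq_zero.mp h' with h'' | h''
    · exact h1 h''
    · exact h2 h''
  rw [eq_div_iff hd]
  field_simp
  ring

/-- Euler–Ramanujan identity: for complex `X`, `A` with `cos A ≠ 0`,
`cos (X + A) / cos A` equals the infinite product
`∏_{k=1}^∞ (1 - X/((k-1/2)π - A)) (1 + X/((k-1/2)π + A))`,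
understood as the limit of partial products. Here the index `k : ℕ`
corresponds to the original index `k + 1`, so `(k - 1/2)π` becomes
`((k : ℂ) + 1/2) * π`. -/
theorem euler_ramanujan_product (X A : ℂ) (hA : Complex.cos A ≠ 0) :
    Filter.Tendsto
      (fun K : ℕ => ∏ k ∈ Finset.range K,
        ((1 - X / (((k : ℂ) + 1 / 2) * Real.pi - A)) *
          (1 + X / (((k : ℂ) + 1 / 2) * Real.pi + A))))
      Filter.atTop (nhds (Complex.cos (X + A) / Complex.cos A)) := by
  have hsub : ∀ k : ℕ, (((k:ℂ) + 1/2) * Real.pi - A) ≠ 0 := by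
    intro k h
    apply hA
    rw [Complex.cos_eq_zero_iff]
    refine ⟨(k:ℤ), ?_⟩
    rw [show A = ((k:ℂ) + 1/2) * Real.pi by linear_combination -h]
    push_cast
    ring
  have hadd : ∀ k : ℕ, (((k:ℂ) + 1/2) * Real.pi + A) ≠ 0 := by
    intro k h
    apply hA
    rw [Complex.cos_eq_zero_iff]
    refine ⟨-(k:ℤ) - 1, ?_⟩
    rw [show A = -(((k:ℂ) + 1/2) * Real.pi) by linear_combination h]
    push_cast
    ring
  have hcne : ∀ k : ℕ, (((k:ℂ) + 1/2) * Real.pi) ≠ 0 :=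
    fun k => mul_ne_zero (half_ne k) pi_ne
  have hfac : ∀ k : ℕ,
      (1 - X / (((k:ℂ) + 1/2) * Real.pi - A)) * (1 + X / (((k:ℂ) + 1/2) * Real.pi + A))
        = (1 - (X+A)^2 / (((k:ℂ) + 1/2) * Real.pi)^2)
            / (1 - A^2 / (((k:ℂ) + 1/2) * Real.pi)^2) :=
    fun k => ratio_fact _ X A (hsub k) (hadd k) (hcne k)
  have h := (cos_prod (X + A)).div (cos_prod A) hA
  refine h.congr fun K => ?_
  simp only [Pi.div_apply]
  rw [← Finset.prod_div_distrib]
  exact (Finset.prod_congr rfl fun k _ => (hfac k)).symm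
end

section
/- Let x and y be real numbers with −π/2 < x < π/2 and −π/2 < y < π/2. Then log(cos(y)/cos(x)) = ∑_{k=1}^∞ log( ((c_k − y)(c_k + y)) / ((c_k − x)(c_k + x)) ), where the series on the right converges. -/
open Real Filter Finset Topology

private lemma ler_ck_pos (k : ℕ) : 0 < ((k : ℝ) + 1 / 2) * π := by positivity

private lemma ler_abs_lt {t : ℝ} (h1 : -(π / 2) < t) (h2 : t < π / 2) (k : ℕ) :
    |t| < ((k : ℝ) + 1 / 2) * π := by
  have ht : |t| < π / 2 := abs_lt.mpr ⟨h1, h2⟩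
  have hk : (0 : ℝ) ≤ (k : ℝ) := Nat.cast_nonneg k
  nlinarith [pi_pos]

private lemma ler_fac_pos {t : ℝ} (h1 : -(π / 2) < t) (h2 : t < π / 2) (k : ℕ) :
    0 < 1 - t ^ 2 / (((k : ℝ) + 1 / 2) * π) ^ 2 := by
  have h := ler_abs_lt h1 h2 k
  have hc := ler_ck_pos k
  rw [sub_pos, div_lt_one (by positivity)]
  nlinarith [abs_nonneg t, sq_abs t]

/-- splitting the product over `range (2*n)` into even and odd indices -/
private lemma ler_prod_split (w : ℝ) (n : ℕ) :
    ∏ j ∈ range (2 * n), (1 - (2 * w) ^ 2 / ((j : ℝ) + 1) ^ 2) =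
      (∏ i ∈ range n, (1 - w ^ 2 / ((i : ℝ) + 1) ^ 2)) *
      ∏ i ∈ range n, (1 - (2 * w) ^ 2 / (2 * (i : ℝ) + 1) ^ 2) := by
  induction n with
  | zero => simp
  | succ n ih =>
    have h2n : 2 * (n + 1) = (2 * n + 1) + 1 := by ring
    rw [h2n, prod_range_succ, prod_range_succ, ih, prod_range_succ, prod_range_succ]
    have e1 : ((2 * n + 1 : ℕ) : ℝ) + 1 = 2 * ((n : ℝ) + 1) := by push_cast; ring
    have e2 : ((2 * n : ℕ) : ℝ) + 1 = 2 * (n : ℝ) + 1 := by push_cast; ring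
    rw [e1, e2]
    have hne : ((n : ℝ) + 1) ≠ 0 := by positivity
    field_simp

/-- the cosine infinite product (as a limit of partial products) -/
private lemma ler_tendsto_cos_prod {t : ℝ} (h1 : -(π / 2) < t) (h2 : t < π / 2) :
    Tendsto (fun n : ℕ => ∏ k ∈ range n, (1 - t ^ 2 / (((k : ℝ) + 1 / 2) * π) ^ 2))
      atTop (𝓝 (Real.cos t)) := by
  rcases eq_or_ne t 0 with rfl | ht0
  · simpa using tendsto_const_nhds
  set w : ℝ := t / π with hw
  have hπ : (0 : ℝ) < π := pi_pos
  have htw : t = π * w := by rw [hw]; field_simp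
  have hw2 : |w| < 1 / 2 := by
    rw [hw, abs_div, abs_of_pos hπ, div_lt_iff₀ hπ]
    have := abs_lt.mpr ⟨h1, h2⟩
    linarith
  have hsin : Real.sin t ≠ 0 := by
    rcases lt_or_gt_of_ne ht0 with hneg | hpos
    · have : 0 < Real.sin (-t) := sin_pos_of_pos_of_lt_pi (by linarith) (by linarith)
      rw [Real.sin_neg] at this; linarith
    · have : 0 < Real.sin t := sin_pos_of_pos_of_lt_pi hpos (by linarith)
      linarith
  -- factor equality: the factors of our product are the "odd" factors
  have hfac : ∀ k : ℕ, 1 - t ^ 2 / (((k : ℝ) + 1 / 2) * π) ^ 2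
      = 1 - (2 * w) ^ 2 / (2 * (k : ℝ) + 1) ^ 2 := by
    intro k
    have hk1 : (2 * (k : ℝ) + 1) ≠ 0 := by positivity
    have hck : (((k : ℝ) + 1 / 2) * π) ≠ 0 := (ler_ck_pos k).ne'
    rw [htw]
    field_simp
  -- the even partial products are positive
  have heven_pos : ∀ n : ℕ, 0 < ∏ i ∈ range n, (1 - w ^ 2 / ((i : ℝ) + 1) ^ 2) := by
    intro n
    apply Finset.prod_pos
    intro i _
    have hi : (1 : ℝ) ≤ ((i : ℝ) + 1) := by
      have : (0:ℝ) ≤ (i:ℝ) := Nat.cast_nonneg i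
      linarith
    have : w ^ 2 < 1 := by nlinarith [sq_abs w, abs_nonneg w]
    have h1i : (1:ℝ) ≤ ((i : ℝ) + 1) ^ 2 := by nlinarith
    have : w ^ 2 / ((i : ℝ) + 1) ^ 2 < 1 := by
      rw [div_lt_one (by positivity)]; nlinarith
    linarith
  have h2n : Tendsto (fun n : ℕ => 2 * n) atTop atTop :=
    tendsto_atTop_atTop.mpr fun b => ⟨b, fun a ha => by omega⟩
  have hA : Tendsto (fun n : ℕ => π * (2 * w) *
      ∏ j ∈ range (2 * n), (1 - (2 * w) ^ 2 / ((j : ℝ) + 1) ^ 2))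
      atTop (𝓝 (Real.sin (π * (2 * w)))) :=
    (Real.tendsto_euler_sin_prod (2 * w)).comp h2n
  have hB : Tendsto (fun n : ℕ => π * w *
      ∏ i ∈ range n, (1 - w ^ 2 / ((i : ℝ) + 1) ^ 2))
      atTop (𝓝 (Real.sin (π * w))) := Real.tendsto_euler_sin_prod w
  have hsinw : Real.sin (π * w) ≠ 0 := by rwa [← htw]
  have h2B : Tendsto (fun n : ℕ => 2 * (π * w *
      ∏ i ∈ range n, (1 - w ^ 2 / ((i : ℝ) + 1) ^ 2)))
      atTop (𝓝 (2 * Real.sin (π * w))) := hB.const_mul 2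
  have hdiv : Tendsto (fun n : ℕ =>
      (π * (2 * w) * ∏ j ∈ range (2 * n), (1 - (2 * w) ^ 2 / ((j : ℝ) + 1) ^ 2)) /
      (2 * (π * w * ∏ i ∈ range n, (1 - w ^ 2 / ((i : ℝ) + 1) ^ 2))))
      atTop (𝓝 (Real.sin (π * (2 * w)) / (2 * Real.sin (π * w)))) :=
    hA.div h2B (by simpa using hsinw)
  have hval : Real.sin (π * (2 * w)) / (2 * Real.sin (π * w)) = Real.cos t := by
    have : π * (2 * w) = 2 * t := by rw [htw]; ring
    rw [this, ← htw, Real.sin_two_mul]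
    field_simp
  rw [hval] at hdiv
  refine hdiv.congr fun n => ?_
  rw [ler_prod_split]
  have hπw : π * w ≠ 0 := by rw [← htw]; exact ht0
  have hev := (heven_pos n).ne'
  rw [Finset.prod_congr rfl fun k _ => hfac k]
  have hden : (2 : ℝ) * (π * w * ∏ i ∈ range n, (1 - w ^ 2 / ((i : ℝ) + 1) ^ 2)) ≠ 0 :=
    mul_ne_zero two_ne_zero (mul_ne_zero hπw hev)
  rw [show π * (2 * w) * ((∏ i ∈ range n, (1 - w ^ 2 / ((i : ℝ) + 1) ^ 2)) *
      ∏ i ∈ range n, (1 - (2 * w) ^ 2 / (2 * (i : ℝ) + 1) ^ 2))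
    = (∏ i ∈ range n, (1 - (2 * w) ^ 2 / (2 * (i : ℝ) + 1) ^ 2)) *
      (2 * (π * w * ∏ i ∈ range n, (1 - w ^ 2 / ((i : ℝ) + 1) ^ 2))) from by ring,
    mul_div_assoc, div_self hden, mul_one]

/-- summability of the log factors -/
private lemma ler_summable {t : ℝ} (h1 : -(π / 2) < t) (h2 : t < π / 2) :
    Summable (fun k : ℕ => Real.log (1 - t ^ 2 / (((k : ℝ) + 1 / 2) * π) ^ 2)) := by
  rw [← summable_neg_iff]
  set δ : ℝ := 1 - t ^ 2 / ((1 / 2 : ℝ) * π) ^ 2 with hδ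
  have hδ0 : 0 < δ := by
    have h0 := ler_fac_pos h1 h2 0
    simpa only [Nat.cast_zero, zero_add] using h0
  have hbound : ∀ k : ℕ, -Real.log (1 - t ^ 2 / (((k : ℝ) + 1 / 2) * π) ^ 2)
      ≤ (4 * t ^ 2 / (π ^ 2 * δ)) * (1 / ((k : ℝ) + 1) ^ 2) := by
    intro k
    have hfp := ler_fac_pos h1 h2 k
    have hπ := pi_pos
    set u : ℝ := t ^ 2 / (((k : ℝ) + 1 / 2) * π) ^ 2 with hu
    have hu0 : 0 ≤ u := by positivity
    have hδu : δ ≤ 1 - u := by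
      have hk : (0:ℝ) ≤ (k:ℝ) := Nat.cast_nonneg k
      have hmono : ((1 / 2 : ℝ) * π) ^ 2 ≤ (((k : ℝ) + 1 / 2) * π) ^ 2 := by
        nlinarith [mul_nonneg (mul_nonneg hk hk) (sq_nonneg π), mul_nonneg hk (sq_nonneg π)]
      have : u ≤ t ^ 2 / ((1 / 2 : ℝ) * π) ^ 2 :=
        div_le_div_of_nonneg_left (by positivity) (by positivity) hmono
      simp only [hδ]; linarith
    -- -log(1-u) ≤ 1/(1-u) - 1 = u/(1-u)
    have hlog : -Real.log (1 - u) ≤ u / (1 - u) := by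
      have h := Real.log_le_sub_one_of_pos (show (0:ℝ) < (1 - u)⁻¹ by positivity)
      rw [Real.log_inv] at h
      have : (1 - u)⁻¹ - 1 = u / (1 - u) := by field_simp; ring
      linarith
    have hle : u / (1 - u) ≤ u / δ := by
      apply div_le_div_of_nonneg_left hu0 hδ0 hδu
    have huk : u ≤ (4 * t ^ 2 / π ^ 2) * (1 / ((k : ℝ) + 1) ^ 2) := by
      have hk : (0:ℝ) ≤ (k:ℝ) := Nat.cast_nonneg k
      rw [hu]
      rw [div_le_iff₀ (by positivity)]
      have expand : (4 * t ^ 2 / π ^ 2) * (1 / ((k : ℝ) + 1) ^ 2) * (((k : ℝ) + 1 / 2) * π) ^ 2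
          = t ^ 2 * (4 * ((k:ℝ) + 1/2)^2 / ((k:ℝ)+1)^2) := by
        field_simp
      rw [expand]
      have hrat : ((k:ℝ)+1)^2 ≤ 4*((k:ℝ)+1/2)^2 := by nlinarith
      have hr : (1:ℝ) ≤ 4*((k:ℝ)+1/2)^2/((k:ℝ)+1)^2 :=
        (one_le_div (by positivity)).mpr hrat
      nlinarith [mul_le_mul_of_nonneg_left hr (sq_nonneg t)]
    calc -Real.log (1 - u) ≤ u / (1 - u) := hlog
      _ ≤ u / δ := hle
      _ ≤ ((4 * t ^ 2 / π ^ 2) * (1 / ((k : ℝ) + 1) ^ 2)) / δ := by gcongr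
      _ = (4 * t ^ 2 / (π ^ 2 * δ)) * (1 / ((k : ℝ) + 1) ^ 2) := by
          simp only [div_eq_mul_inv, mul_inv, one_mul]
          ring
  have hsum : Summable (fun k : ℕ => (4 * t ^ 2 / (π ^ 2 * δ)) * (1 / ((k : ℝ) + 1) ^ 2)) := by
    apply Summable.mul_left
    have : Summable (fun k : ℕ => (1 : ℝ) / (k : ℝ) ^ 2) :=
      Real.summable_one_div_nat_pow.mpr one_lt_two
    have := (summable_nat_add_iff 1).mpr this
    simpa using this
  apply Summable.of_nonneg_of_le ?_ hbound hsum
  intro k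
  have hfp := ler_fac_pos h1 h2 k
  have : Real.log (1 - t ^ 2 / (((k : ℝ) + 1 / 2) * π) ^ 2) ≤ 0 := by
    apply Real.log_nonpos (le_of_lt hfp)
    have : 0 ≤ t ^ 2 / (((k : ℝ) + 1 / 2) * π) ^ 2 := by positivity
    linarith
  linarith

private lemma ler_hasSum_log_cos {t : ℝ} (h1 : -(π / 2) < t) (h2 : t < π / 2) :
    HasSum (fun k : ℕ => Real.log (1 - t ^ 2 / (((k : ℝ) + 1 / 2) * π) ^ 2))
      (Real.log (Real.cos t)) := by
  have hs := ler_summable h1 h2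
  obtain ⟨S, hS⟩ := hs
  have hexp : Tendsto (fun n : ℕ => Real.exp (∑ k ∈ range n,
      Real.log (1 - t ^ 2 / (((k : ℝ) + 1 / 2) * π) ^ 2))) atTop (𝓝 (Real.exp S)) :=
    (Real.continuous_exp.tendsto S).comp hS.tendsto_sum_nat
  have hprod : Tendsto (fun n : ℕ => ∏ k ∈ range n,
      (1 - t ^ 2 / (((k : ℝ) + 1 / 2) * π) ^ 2)) atTop (𝓝 (Real.exp S)) := by
    refine hexp.congr fun n => ?_
    rw [Real.exp_sum]
    exact Finset.prod_congr rfl fun k _ => Real.exp_log (ler_fac_pos h1 h2 k)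
  have huniq : Real.exp S = Real.cos t :=
    tendsto_nhds_unique hprod (ler_tendsto_cos_prod h1 h2)
  have : S = Real.log (Real.cos t) := by rw [← huniq, Real.log_exp]
  rwa [← this]

/-- Logarithmic form of the Euler–Ramanujan identity: for `x, y ∈ (-π/2, π/2)`,
`log (cos y / cos x) = ∑_{k=1}^∞ log (((c_k - y)(c_k + y)) / ((c_k - x)(c_k + x)))`
where `c_k = (k - 1/2)π`.  The index `k : ℕ` corresponds to the original index
`k + 1`, so `c_k` becomes `((k : ℝ) + 1/2) * π`. -/
theorem log_euler_ramanujan (x y : ℝ)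
    (hx₁ : -(Real.pi / 2) < x) (hx₂ : x < Real.pi / 2)
    (hy₁ : -(Real.pi / 2) < y) (hy₂ : y < Real.pi / 2) :
    HasSum
      (fun k : ℕ => Real.log
        (((((k : ℝ) + 1 / 2) * Real.pi - y) * (((k : ℝ) + 1 / 2) * Real.pi + y)) /
          ((((k : ℝ) + 1 / 2) * Real.pi - x) * (((k : ℝ) + 1 / 2) * Real.pi + x))))
      (Real.log (Real.cos y / Real.cos x)) := by
  have hcx : 0 < Real.cos x := Real.cos_pos_of_mem_Ioo ⟨hx₁, hx₂⟩
  have hcy : 0 < Real.cos y := Real.cos_pos_of_mem_Ioo ⟨hy₁, hy₂⟩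
  have key := (ler_hasSum_log_cos hy₁ hy₂).sub (ler_hasSum_log_cos hx₁ hx₂)
  have hL : Real.log (Real.cos y) - Real.log (Real.cos x)
      = Real.log (Real.cos y / Real.cos x) := (Real.log_div hcy.ne' hcx.ne').symm
  rw [hL] at key
  convert key using 2 with k
  case e'_3 => rfl
  have hc := ler_ck_pos k
  have hpy := ler_fac_pos hy₁ hy₂ k
  have hpx := ler_fac_pos hx₁ hx₂ k
  set c : ℝ := ((k : ℝ) + 1 / 2) * Real.pi with hcdef
  have e1 : (c - y) * (c + y) = c ^ 2 * (1 - y ^ 2 / c ^ 2) := by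
    field_simp; ring
  have e2 : (c - x) * (c + x) = c ^ 2 * (1 - x ^ 2 / c ^ 2) := by
    field_simp; ring
  rw [e1, e2, mul_div_mul_left _ _ (by positivity : (c : ℝ) ^ 2 ≠ 0),
    Real.log_div hpy.ne' hpx.ne']
end

section
/- Let x and y be real numbers with |x| < π/(2√2) and |y| < √(π/2). Then log(cos(y)/cos(x)) = ∑_{k=1}^∞ [ L_k(1, x²/(c_k² − x²)) − M_k(1, y²/c_k²) ], where the outer series converges. (Note that the hypotheses guarantee |x²/(c_k² − x²)| < 1 and |y²/c_k²| < 1 for all k ≥ 1, so each inner series converges.) -/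
open Real Filter Finset Topology

lemma prod_split (x : ℝ) (n : ℕ) :
    ∏ j ∈ range (2*n), (1 - (2*x)^2/((j:ℝ)+1)^2) =
      (∏ j ∈ range n, (1 - x^2/((j:ℝ)+1)^2)) *
      ∏ j ∈ range n, (1 - (2*x)^2/((2*(j:ℝ))+1)^2) := by
  induction n with
  | zero => simp
  | succ n ih =>
    have h2 : 2 * (n+1) = (2*n) + 1 + 1 := by ring
    rw [h2, prod_range_succ, prod_range_succ, prod_range_succ, prod_range_succ, ih]
    have hne : ((2*n:ℝ)+1+1) ≠ 0 := by positivity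
    have hne2 : ((n:ℝ)+1) ≠ 0 := by positivity
    push_cast
    field_simp
    ring

lemma tendsto_prod_cos (t : ℝ) (ht0 : t ≠ 0) (ht : |t| < π) :
    Tendsto (fun n : ℕ => ∏ j ∈ range n, (1 - t^2/(((j:ℝ)+1/2)*π)^2)) atTop (𝓝 (Real.cos t)) := by
  have hpi : (π : ℝ) ≠ 0 := pi_ne_zero
  have hsin : Real.sin t ≠ 0 := by
    rcases lt_or_gt_of_ne ht0 with h | h
    · have : 0 < Real.sin (-t) := Real.sin_pos_of_pos_of_lt_pi (by linarith) (by
        rw [abs_lt] at ht; linarith)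
      rw [Real.sin_neg] at this; linarith
    · have : 0 < Real.sin t := Real.sin_pos_of_pos_of_lt_pi h (by rw [abs_lt] at ht; linarith)
      exact this.ne'
  set u : ℝ := t / π with hu
  have hpu : π * u = t := by rw [hu]; field_simp
  have hA : Tendsto (fun n : ℕ => π * u * ∏ j ∈ range n, (1 - u^2/((j:ℝ)+1)^2)) atTop
      (𝓝 (Real.sin t)) := by
    rw [show Real.sin t = Real.sin (π*u) from by rw [hpu]]
    exact Real.tendsto_euler_sin_prod u
  have hB0 : Tendsto (fun n : ℕ => π * (2*u) * ∏ j ∈ range n, (1 - (2*u)^2/((j:ℝ)+1)^2)) atTop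
      (𝓝 (Real.sin (2*t))) := by
    rw [show Real.sin (2*t) = Real.sin (π*(2*u)) from by rw [show π*(2*u) = 2*(π*u) from by ring, hpu]]
    exact Real.tendsto_euler_sin_prod (2*u)
  have hB : Tendsto (fun n : ℕ => π * (2*u) * ∏ j ∈ range (2*n), (1 - (2*u)^2/((j:ℝ)+1)^2)) atTop
      (𝓝 (Real.sin (2*t))) := by
    refine hB0.comp (tendsto_atTop_atTop.2 fun b => ⟨b, fun a ha => by omega⟩)
  -- B_n = 2 * A_n * Q_n
  have key : ∀ n : ℕ, π * (2*u) * ∏ j ∈ range (2*n), (1 - (2*u)^2/((j:ℝ)+1)^2) =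
      2 * (π * u * ∏ j ∈ range n, (1 - u^2/((j:ℝ)+1)^2)) *
        ∏ j ∈ range n, (1 - (2*u)^2/((2*(j:ℝ))+1)^2) := by
    intro n; rw [prod_split]; ring
  have hAne : Real.sin t ≠ 0 := hsin
  have hdiv : Tendsto (fun n : ℕ =>
      (π * (2*u) * ∏ j ∈ range (2*n), (1 - (2*u)^2/((j:ℝ)+1)^2)) /
        (2 * (π * u * ∏ j ∈ range n, (1 - u^2/((j:ℝ)+1)^2)))) atTop
      (𝓝 (Real.sin (2*t) / (2 * Real.sin t))) :=
    hB.div (hA.const_mul 2) (by simpa using hAne)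
  have hcos : Real.sin (2*t) / (2 * Real.sin t) = Real.cos t := by
    rw [Real.sin_two_mul]; field_simp
  rw [← hcos]
  have hev : ∀ᶠ n : ℕ in atTop,
      (π * (2*u) * ∏ j ∈ range (2*n), (1 - (2*u)^2/((j:ℝ)+1)^2)) /
        (2 * (π * u * ∏ j ∈ range n, (1 - u^2/((j:ℝ)+1)^2))) =
      ∏ j ∈ range n, (1 - t^2/(((j:ℝ)+1/2)*π)^2) := by
    have hAne' : ∀ᶠ n : ℕ in atTop, π * u * ∏ j ∈ range n, (1 - u^2/((j:ℝ)+1)^2) ≠ 0 :=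
      hA.eventually_ne hAne
    filter_upwards [hAne'] with n hn
    rw [key n]
    rw [mul_comm (2 * (π * u * ∏ j ∈ range n, (1 - u^2/((j:ℝ)+1)^2)))]
    rw [mul_div_assoc, div_self (by exact mul_ne_zero two_ne_zero hn), mul_one]
    refine prod_congr rfl fun j _ => ?_
    rw [hu]
    have h1 : ((j:ℝ)+1/2)*π ≠ 0 := by positivity
    have h2 : (2*(j:ℝ)+1) ≠ 0 := by positivity
    field_simp
  exact hdiv.congr' hev

lemma hasSum_log_cos (t : ℝ) (ht : |t| < π/2) :
    HasSum (fun k : ℕ => Real.log (1 - t^2/(((k:ℝ)+1/2)*π)^2)) (Real.log (Real.cos t)) := by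
  have hpi := Real.pi_pos
  have hc : ∀ k : ℕ, π/2 ≤ ((k:ℝ)+1/2)*π := by
    intro k
    have : (1/2:ℝ) ≤ (k:ℝ)+1/2 := by
      have := (Nat.cast_nonneg k : (0:ℝ) ≤ k); linarith
    calc π/2 = (1/2)*π := by ring
    _ ≤ ((k:ℝ)+1/2)*π := by nlinarith
  have hcpos : ∀ k : ℕ, 0 < ((k:ℝ)+1/2)*π := fun k => lt_of_lt_of_le (by positivity) (hc k)
  have ht2 : t^2 < (π/2)^2 := by
    have := abs_nonneg t
    nlinarith [sq_abs t]
  have ha : ∀ k : ℕ, t^2/(((k:ℝ)+1/2)*π)^2 < 1 := by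
    intro k
    rw [div_lt_one (by positivity)]
    calc t^2 < (π/2)^2 := ht2
    _ ≤ (((k:ℝ)+1/2)*π)^2 := by nlinarith [hc k, hcpos k]
  have hanonneg : ∀ k : ℕ, 0 ≤ t^2/(((k:ℝ)+1/2)*π)^2 := fun k => by positivity
  have hfpos : ∀ k : ℕ, 0 < 1 - t^2/(((k:ℝ)+1/2)*π)^2 := fun k => by linarith [ha k]
  set δ : ℝ := 1 - t^2/(π/2)^2 with hδ
  have hδpos : 0 < δ := by
    rw [hδ, sub_pos, div_lt_one (by positivity)]; exact ht2
  have hδle : ∀ k : ℕ, δ ≤ 1 - t^2/(((k:ℝ)+1/2)*π)^2 := by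
    intro k
    have : t^2/(((k:ℝ)+1/2)*π)^2 ≤ t^2/(π/2)^2 := by
      apply div_le_div_of_nonneg_left (by positivity) (by positivity)
      nlinarith [hc k, hcpos k]
    rw [hδ]; linarith
  -- summability
  have hbound : ∀ k : ℕ, |Real.log (1 - t^2/(((k:ℝ)+1/2)*π)^2)| ≤
      (t^2 * 4 / (π^2 * δ)) * (1/((k:ℝ)+1)^2) := by
    intro k
    have h1 : Real.log (1 - t^2/(((k:ℝ)+1/2)*π)^2) ≤ 0 :=
      Real.log_nonpos (le_of_lt (hfpos k)) (by linarith [hanonneg k])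
    rw [abs_of_nonpos h1]
    have h2 : -Real.log (1 - t^2/(((k:ℝ)+1/2)*π)^2) =
        Real.log (1 - t^2/(((k:ℝ)+1/2)*π)^2)⁻¹ := (Real.log_inv _).symm
    rw [h2]
    have h3 := Real.log_le_sub_one_of_pos (inv_pos.2 (hfpos k))
    have h4 : (1 - t^2/(((k:ℝ)+1/2)*π)^2)⁻¹ - 1 =
        (t^2/(((k:ℝ)+1/2)*π)^2) / (1 - t^2/(((k:ℝ)+1/2)*π)^2) := by
      rw [eq_div_iff (hfpos k).ne', sub_mul, inv_mul_cancel₀ (hfpos k).ne', one_mul]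
      ring
    rw [h4] at h3
    refine h3.trans ?_
    have h5 : (t^2/(((k:ℝ)+1/2)*π)^2) / (1 - t^2/(((k:ℝ)+1/2)*π)^2) ≤
        (t^2/(((k:ℝ)+1/2)*π)^2) / δ := by
      apply div_le_div_of_nonneg_left (hanonneg k) hδpos (hδle k)
    refine h5.trans ?_
    have h6 : ((k:ℝ)+1)*π/2 ≤ ((k:ℝ)+1/2)*π := by nlinarith [(Nat.cast_nonneg k : (0:ℝ) ≤ k)]
    have h7 : (((k:ℝ)+1)*π/2)^2 ≤ (((k:ℝ)+1/2)*π)^2 := by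
      have : 0 < ((k:ℝ)+1)*π/2 := by positivity
      nlinarith
    have h9 : (t^2/(((k:ℝ)+1)*π/2)^2)/δ = (t^2*4/(π^2*δ)) * (1/((k:ℝ)+1)^2) := by
      field_simp
      ring
    rw [← h9]
    gcongr
  have hg : Summable (fun k : ℕ => (t^2 * 4 / (π^2 * δ)) * (1/((k:ℝ)+1)^2)) := by
    apply Summable.mul_left
    have := (summable_nat_add_iff 1).2 (Real.summable_one_div_nat_pow.2 one_lt_two)
    simpa using this
  have hf : Summable (fun k : ℕ => Real.log (1 - t^2/(((k:ℝ)+1/2)*π)^2)) := by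
    refine Summable.of_abs (hg.of_nonneg_of_le (fun k => abs_nonneg _) hbound)
  -- cos t positive
  have hcos : 0 < Real.cos t := by
    apply Real.cos_pos_of_mem_Ioo
    rw [abs_lt] at ht
    constructor <;> [linarith; linarith]
  -- identify the limit
  rcases eq_or_ne t 0 with rfl | ht0
  · simpa using (hasSum_zero : HasSum (fun _ : ℕ => (0:ℝ)) 0)
  · have hQ := tendsto_prod_cos t ht0 (by linarith [abs_lt.1 ht, hpi])
    have hlogQ : Tendsto (fun n : ℕ =>
        Real.log (∏ j ∈ range n, (1 - t^2/(((j:ℝ)+1/2)*π)^2))) atTop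
        (𝓝 (Real.log (Real.cos t))) :=
      ((Real.continuousAt_log hcos.ne').tendsto).comp hQ
    have hlogeq : ∀ n : ℕ, Real.log (∏ j ∈ range n, (1 - t^2/(((j:ℝ)+1/2)*π)^2)) =
        ∑ j ∈ range n, Real.log (1 - t^2/(((j:ℝ)+1/2)*π)^2) :=
      fun n => Real.log_prod (fun j _ => (hfpos j).ne')
    have hpartial : Tendsto (fun n : ℕ =>
        ∑ j ∈ range n, Real.log (1 - t^2/(((j:ℝ)+1/2)*π)^2)) atTop
        (𝓝 (Real.log (Real.cos t))) := by
      refine hlogQ.congr fun n => hlogeq n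
    have h1 := hf.hasSum
    have h2 := h1.tendsto_sum_nat
    have := tendsto_nhds_unique h2 hpartial
    rwa [this] at h1

lemma hasSum_alt (a : ℝ) (ha : |a| < 1) :
    HasSum (fun n : ℕ => (-1:ℝ)^n * a^(n+1)/((n:ℝ)+1)) (Real.log (1+a)) := by
  have h := Real.hasSum_pow_div_log_of_abs_lt_one (x := -a) (by rwa [abs_neg])
  have h2 := h.neg
  rw [sub_neg_eq_add, neg_neg] at h2
  refine h2.congr_fun fun n => ?_
  rw [neg_pow, pow_succ]
  ring

/-- Dirichlet series form of the Euler–Ramanujan identity: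
for `|x| < π/(2√2)` and `|y| < √(π/2)`,
`log (cos y / cos x) = ∑_{k=1}^∞ [L_k(1, x²/(c_k² - x²)) - M_k(1, y²/c_k²)]`,
where `c_k = (k - 1/2)π`, `L_k(1,a) = ∑_{n=1}^∞ (-1)^{n+1} aⁿ/n` and
`M_k(1,b) = ∑_{n=1}^∞ bⁿ/n`.  The outer index `k : ℕ` corresponds to the
original index `k + 1` (so `c_k = ((k:ℝ) + 1/2) * π`), and the inner index
`n : ℕ` to the original `n + 1`. -/
theorem log_euler_ramanujan_dirichlet (x y : ℝ)
    (hx : |x| < Real.pi / (2 * Real.sqrt 2)) (hy : |y| < Real.sqrt (Real.pi / 2)) :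
    HasSum
      (fun k : ℕ =>
        (∑' n : ℕ, (-1 : ℝ) ^ n *
            (x ^ 2 / ((((k : ℝ) + 1 / 2) * Real.pi) ^ 2 - x ^ 2)) ^ (n + 1) / ((n : ℝ) + 1)) -
        (∑' n : ℕ,
            (y ^ 2 / (((k : ℝ) + 1 / 2) * Real.pi) ^ 2) ^ (n + 1) / ((n : ℝ) + 1)))
      (Real.log (Real.cos y / Real.cos x)) := by
  have hpi := Real.pi_pos
  have hpi3 := Real.pi_gt_three
  have hs2 : (1:ℝ) < Real.sqrt 2 := by
    rw [show (1:ℝ) = Real.sqrt 1 from (Real.sqrt_one).symm]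
    exact Real.sqrt_lt_sqrt (by norm_num) (by norm_num)
  have hx2 : x^2 < π^2/8 := by
    have h1 : |x|^2 < (π/(2*Real.sqrt 2))^2 := by
      apply pow_lt_pow_left₀ hx (abs_nonneg x)
      norm_num
    rwa [sq_abs, div_pow, mul_pow, Real.sq_sqrt (by norm_num : (0:ℝ) ≤ 2),
      show ((2:ℝ)^2 * 2) = 8 by norm_num] at h1
  have hy2 : y^2 < π/2 := by
    have h1 : |y|^2 < (Real.sqrt (π/2))^2 := by
      apply pow_lt_pow_left₀ hy (abs_nonneg y)
      norm_num
    rwa [sq_abs, Real.sq_sqrt (by positivity)] at h1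
  have hx' : |x| < π/2 := by
    calc |x| < π/(2*Real.sqrt 2) := hx
    _ < π/2 := by
      apply div_lt_div_of_pos_left hpi (by norm_num)
      nlinarith
  have hy' : |y| < π/2 := by
    calc |y| < Real.sqrt (π/2) := hy
    _ < π/2 := (Real.sqrt_lt' (by positivity)).2 (by nlinarith)
  have hc : ∀ k : ℕ, π/2 ≤ ((k:ℝ)+1/2)*π := by
    intro k
    have := (Nat.cast_nonneg k : (0:ℝ) ≤ k)
    nlinarith
  have hcsq : ∀ k : ℕ, π^2/4 ≤ (((k:ℝ)+1/2)*π)^2 := by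
    intro k
    have h1 := hc k
    nlinarith
  have hcosx : 0 < Real.cos x := Real.cos_pos_of_mem_Ioo
    ⟨by linarith [abs_lt.1 hx'], by linarith [abs_lt.1 hx']⟩
  have hcosy : 0 < Real.cos y := Real.cos_pos_of_mem_Ioo
    ⟨by linarith [abs_lt.1 hy'], by linarith [abs_lt.1 hy']⟩
  have key : (fun k : ℕ =>
        (∑' n : ℕ, (-1 : ℝ) ^ n *
            (x ^ 2 / ((((k : ℝ) + 1 / 2) * Real.pi) ^ 2 - x ^ 2)) ^ (n + 1) / ((n : ℝ) + 1)) -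
        (∑' n : ℕ,
            (y ^ 2 / (((k : ℝ) + 1 / 2) * Real.pi) ^ 2) ^ (n + 1) / ((n : ℝ) + 1))) =
      fun k : ℕ => Real.log (1 - y^2/(((k:ℝ)+1/2)*π)^2) -
        Real.log (1 - x^2/(((k:ℝ)+1/2)*π)^2) := by
    funext k
    set c : ℝ := ((k:ℝ)+1/2)*π with hcdef
    have hcpos : 0 < c := lt_of_lt_of_le (by positivity) (hc k)
    have hc2 : π^2/4 ≤ c^2 := hcsq k
    have hden : 0 < c^2 - x^2 := by nlinarith
    have ha : |x^2/(c^2 - x^2)| < 1 := by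
      rw [abs_of_nonneg (by positivity), div_lt_one hden]
      nlinarith
    have hb : |y^2/c^2| < 1 := by
      rw [abs_of_nonneg (by positivity), div_lt_one (by positivity)]
      nlinarith
    have h1 := (hasSum_alt _ ha).tsum_eq
    have h2 := (Real.hasSum_pow_div_log_of_abs_lt_one hb).tsum_eq
    rw [h1, h2]
    have h3 : 1 + x^2/(c^2 - x^2) = (1 - x^2/c^2)⁻¹ := by
      rw [inv_eq_one_div]
      field_simp
      ring
    rw [h3, Real.log_inv]
    ring
  rw [key, show Real.log (Real.cos y / Real.cos x) =
    Real.log (Real.cos y) - Real.log (Real.cos x) from Real.log_div hcosy.ne' hcosx.ne']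
  exact (hasSum_log_cos y hy').sub (hasSum_log_cos x hx')
end

section
/- Let ζ be a complex number with |ζ| < 1/2, and set x = 2·Re(arctan ζ) and y = −Im(log((1 + ζ)/(1 − ζ))), where arctan ζ = (i/2)(log(1 − iζ) − log(1 + iζ)) and log is the principal branch. Then Re(log((1 + ζ²)/(1 − ζ²))) = log(cos(y)/cos(x)). -/
private lemma aux_ne (w : ℂ) (h : ‖w‖ < 1) : 1 + w ≠ 0 := by
  intro h0
  have hw : w = -1 := by linear_combination h0
  rw [hw] at h
  simp at h

/-- Weierstrass–Enneper parametrization of Scherk's surface: for `|ζ| < 1/2`,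
with `x = 2 Re (arctan ζ)` and `y = -Im (log ((1+ζ)/(1-ζ)))`
(where `arctan ζ = (i/2)(log(1 - iζ) - log(1 + iζ))` and `log` is principal),
one has `Re (log ((1+ζ²)/(1-ζ²))) = log (cos y / cos x)`. -/
theorem scherk_weierstrass_enneper (ζ : ℂ) (hζ : ‖ζ‖ < 1 / 2)
    (x y : ℝ)
    (hx : x = 2 * ((Complex.I / 2) *
      (Complex.log (1 - Complex.I * ζ) - Complex.log (1 + Complex.I * ζ))).re)
    (hy : y = -(Complex.log ((1 + ζ) / (1 - ζ))).im) :
    (Complex.log ((1 + ζ ^ 2) / (1 - ζ ^ 2))).re = Real.log (Real.cos y / Real.cos x) := by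
  have habs2 : ‖ζ ^ 2‖ < 1 := by
    rw [norm_pow]
    nlinarith [norm_nonneg ζ]
  have h1 : (1 : ℂ) + ζ ^ 2 ≠ 0 := aux_ne _ habs2
  have h2 : (1 : ℂ) - ζ ^ 2 ≠ 0 := by
    have := aux_ne (-ζ ^ 2) (by simpa using habs2)
    simpa [sub_eq_add_neg] using this
  have hiζ : ‖Complex.I * ζ‖ < 1 := by
    rw [norm_mul]; simp; linarith
  have h3 : (1 : ℂ) + Complex.I * ζ ≠ 0 := aux_ne _ hiζ
  have h4 : (1 : ℂ) - Complex.I * ζ ≠ 0 := by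
    have := aux_ne (-(Complex.I * ζ)) (by simpa using hiζ)
    simpa [sub_eq_add_neg] using this
  have hζ1 : ‖ζ‖ < 1 := by linarith
  have h5 : (1 : ℂ) + ζ ≠ 0 := aux_ne _ hζ1
  have h6 : (1 : ℂ) - ζ ≠ 0 := by
    have := aux_ne (-ζ) (by simpa using hζ1)
    simpa [sub_eq_add_neg] using this
  have hA1 : 0 < ‖1 + ζ ^ 2‖ := norm_pos_iff.mpr h1
  have hA2 : 0 < ‖1 - ζ ^ 2‖ := norm_pos_iff.mpr h2
  have hA3 : 0 < ‖1 + Complex.I * ζ‖ := norm_pos_iff.mpr h3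
  have hA4 : 0 < ‖1 - Complex.I * ζ‖ := norm_pos_iff.mpr h4
  have hA5 : 0 < ‖1 + ζ‖ := norm_pos_iff.mpr h5
  have hA6 : 0 < ‖1 - ζ‖ := norm_pos_iff.mpr h6
  have hs : Complex.normSq ζ < 1 := by
    rw [← Complex.sq_norm]
    nlinarith [norm_nonneg ζ]
  -- value of x
  have hxval : x = Complex.arg (1 + Complex.I * ζ) - Complex.arg (1 - Complex.I * ζ) := by
    rw [hx]
    simp [Complex.mul_re, Complex.sub_re, Complex.sub_im, Complex.log_im]
  have habsmul : ‖1 + Complex.I * ζ‖ * ‖1 - Complex.I * ζ‖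
      = ‖1 + ζ ^ 2‖ := by
    rw [← norm_mul]
    congr 1
    ring_nf
    rw [Complex.I_sq]
    ring
  have hcosx : Real.cos x = (1 - Complex.normSq ζ) / ‖1 + ζ ^ 2‖ := by
    rw [hxval, Real.cos_sub, Complex.cos_arg h3, Complex.cos_arg h4,
      Complex.sin_arg, Complex.sin_arg, ← habsmul]
    field_simp
    simp [Complex.add_re, Complex.add_im, Complex.sub_re, Complex.sub_im,
      Complex.mul_re, Complex.mul_im, Complex.normSq_apply]
    ring
  -- value of y
  have hw : (1 + ζ) / (1 - ζ) ≠ 0 := div_ne_zero h5 h6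
  have habsmul2 : ‖1 + ζ‖ * ‖1 - ζ‖ = ‖1 - ζ ^ 2‖ := by
    rw [← norm_mul]
    congr 1
    ring
  have hcosy : Real.cos y = (1 - Complex.normSq ζ) / ‖1 - ζ ^ 2‖ := by
    rw [hy, Real.cos_neg, Complex.log_im, Complex.cos_arg hw, Complex.div_re,
      norm_div, ← habsmul2]
    rw [Complex.normSq_eq_norm_sq]
    field_simp
    simp [Complex.add_re, Complex.add_im, Complex.sub_re, Complex.sub_im,
      Complex.normSq_apply]
    ring
  have hratio : Real.cos y / Real.cos x
      = ‖1 + ζ ^ 2‖ / ‖1 - ζ ^ 2‖ := by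
    rw [hcosx, hcosy]
    have h1s : (1 : ℝ) - Complex.normSq ζ ≠ 0 := by linarith
    field_simp
  rw [hratio, Complex.log_re, norm_div, Real.log_div hA1.ne' hA2.ne']
end

section
/- Let X be a real number and let A be a real number with 0 < A < π. Then arctan(tanh(X)·cot(A)) = arctan(X/A) + ∑_{k=1}^∞ ( arctan(X/(kπ + A)) − arctan(X/(kπ − A)) ), where the series converges. -/
open Real Filter Finset Complex

private lemma arg_eq_arctan' {z : ℂ} (hz : 0 < z.re) :
    Complex.arg z = Real.arctan (z.im / z.re) := by
  have h := Complex.abs_arg_lt_pi_div_two_iff.mpr (Or.inl hz)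
  rw [abs_lt] at h
  rw [← Complex.tan_arg, Real.arctan_tan h.1 h.2]

private lemma re_mk' (a b : ℝ) : ((a:ℂ) + (b:ℂ) * Complex.I).re = a := by
  simp

private lemma im_mk' (a b : ℝ) : ((a:ℂ) + (b:ℂ) * Complex.I).im = b := by
  simp

private lemma fac_eq' (A X p u : ℝ) (hp : p ≠ 0) (hu : u ≠ 0) :
    (1:ℂ) - (((A:ℂ) + (X:ℂ)*Complex.I)/(p:ℂ))^2/((u:ℂ))^2
      = (((((u*p)^2 - A^2 + X^2)/(u*p)^2 : ℝ)) : ℂ)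
        + ((-(2*A*X)/(u*p)^2 : ℝ) : ℂ)*Complex.I := by
  have hpC : (p:ℂ) ≠ 0 := Complex.ofReal_ne_zero.mpr hp
  have huC : (u:ℂ) ≠ 0 := Complex.ofReal_ne_zero.mpr hu
  push_cast
  field_simp
  ring_nf
  simp [Complex.ext_iff]

private lemma key_angle' (A : ℝ) (hA₀ : 0 < A) (hA₁ : A < π) (X : ℝ) {L : ℝ}
    (hL : HasSum (fun k : ℕ =>
      Real.arctan (-(2 * A * X) / ((((k : ℝ) + 1) * π) ^ 2 - A ^ 2 + X ^ 2))) L) :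
    ∃ m : ℤ, Real.arctan (Real.tanh X * Real.cot A) - (Real.arctan (X / A) + L)
      = 2 * π * m := by
  have hπ : (0:ℝ) < π := Real.pi_pos
  have hπC : (π : ℂ) ≠ 0 := Complex.ofReal_ne_zero.mpr hπ.ne'
  have hsinA : 0 < Real.sin A := Real.sin_pos_of_pos_of_lt_pi hA₀ hA₁
  set ζ : ℂ := ((A:ℂ) + (X:ℂ) * Complex.I) / (π:ℂ) with hζ
  have hπζ : (π : ℂ) * ζ = (A:ℂ) + (X:ℂ) * Complex.I := by
    rw [hζ]; field_simp
  set g : ℕ → ℝ := fun k =>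
    Real.arctan (-(2 * A * X) / ((((k : ℝ) + 1) * π) ^ 2 - A ^ 2 + X ^ 2)) with hgdef
  set w : ℕ → ℂ := fun k =>
    ((((((k:ℝ)+1)*π)^2 - A^2 + X^2)/(((k:ℝ)+1)*π)^2 : ℝ) : ℂ)
      + ((-(2*A*X)/(((k:ℝ)+1)*π)^2 : ℝ) : ℂ) * Complex.I with hwdef
  have hck : ∀ k : ℕ, A < ((k:ℝ)+1)*π ∧ 0 < (((k:ℝ)+1)*π) ^ 2 - A ^ 2 + X ^ 2 := by
    intro k
    have hk : (1 : ℝ) ≤ (k : ℝ) + 1 := by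
      have : (0:ℝ) ≤ (k:ℝ) := Nat.cast_nonneg k
      linarith
    have h1 : A < ((k:ℝ)+1)*π := by nlinarith
    exact ⟨h1, by nlinarith⟩
  have hwre : ∀ k, (w k).re = ((((k:ℝ)+1)*π)^2 - A^2 + X^2)/(((k:ℝ)+1)*π)^2 := by
    intro k; rw [hwdef]; exact re_mk' _ _
  have hwim : ∀ k, (w k).im = -(2*A*X)/(((k:ℝ)+1)*π)^2 := by
    intro k; rw [hwdef]; exact im_mk' _ _
  have hwrepos : ∀ k, 0 < (w k).re := by
    intro k
    rw [hwre k]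
    have h1 := (hck k).1
    have h2 := (hck k).2
    have h3 : (0:ℝ) < (((k:ℝ)+1)*π)^2 := by positivity
    positivity
  have hw0 : ∀ k, w k ≠ 0 := by
    intro k h
    have h2 := hwrepos k
    rw [h] at h2
    simp at h2
  have hargw : ∀ k, Complex.arg (w k) = g k := by
    intro k
    rw [arg_eq_arctan' (hwrepos k), hwim, hwre, hgdef]
    congr 1
    have h2 := (hck k).2
    have h3 : ((((k:ℝ)+1)*π) ^ 2 : ℝ) ≠ 0 := by positivity
    field_simp
  have hfac : ∀ k : ℕ, (1 : ℂ) - ζ ^ 2 / ((k : ℂ) + 1) ^ 2 = w k := by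
    intro k
    have hu : ((k:ℝ)+1) ≠ 0 := by positivity
    have h := fac_eq' A X π ((k:ℝ)+1) hπ.ne' hu
    rw [hwdef, hζ]
    simpa using h
  set P : ℕ → ℂ := fun n =>
    (π:ℂ) * ζ * ∏ j ∈ Finset.range n, ((1 : ℂ) - ζ ^ 2 / ((j : ℂ) + 1) ^ 2) with hPdef
  have hz0 : (π:ℂ) * ζ ≠ 0 := by
    rw [hπζ]
    intro h
    have h2 := congrArg Complex.re h
    simp at h2
    linarith
  have hPne : ∀ n, P n ≠ 0 := by
    intro n
    rw [hPdef]
    refine mul_ne_zero hz0 (Finset.prod_ne_zero_iff.mpr ?_)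
    intro j _
    rw [hfac j]
    exact hw0 j
  have hargP : ∀ n, (Complex.arg (P n) : Real.Angle)
      = ((Real.arctan (X/A) + ∑ k ∈ Finset.range n, g k : ℝ) : Real.Angle) := by
    intro n
    induction n with
    | zero =>
        simp only [hPdef, Finset.range_zero, Finset.prod_empty, mul_one, Finset.sum_empty,
          add_zero]
        rw [hπζ]
        congr 1
        have hre : (0:ℝ) < ((A:ℂ) + (X:ℂ)*Complex.I).re := by rw [re_mk']; exact hA₀
        rw [arg_eq_arctan' hre, re_mk', im_mk']
    | succ n ih =>
        have hPsucc : P (n+1) = P n * w n := by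
          rw [hPdef]
          simp only []
          rw [Finset.prod_range_succ, ← mul_assoc, hfac n]
        rw [hPsucc, Complex.arg_mul_coe_angle (hPne n) (hw0 n), ih, hargw n,
          Finset.sum_range_succ, ← Real.Angle.coe_add]
        congr 1
        ring
  -- limits
  have heuler := Complex.tendsto_euler_sin_prod ζ
  rw [hπζ] at heuler
  have hsin : Complex.sin ((A:ℂ) + (X:ℂ)*Complex.I)
      = ((Real.sin A * Real.cosh X : ℝ) : ℂ)
        + ((Real.cos A * Real.sinh X : ℝ) : ℂ) * Complex.I := by
    rw [Complex.sin_add_mul_I, ← Complex.ofReal_sin, ← Complex.ofReal_cosh,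
      ← Complex.ofReal_cos, ← Complex.ofReal_sinh, ← Complex.ofReal_mul, ← Complex.ofReal_mul]
  have hrepos : 0 < (Complex.sin ((A:ℂ) + (X:ℂ)*Complex.I)).re := by
    rw [hsin, re_mk']
    have := Real.cosh_pos X
    positivity
  have hslit : Complex.sin ((A:ℂ) + (X:ℂ)*Complex.I) ∈ Complex.slitPlane :=
    Complex.mem_slitPlane_iff.mpr (Or.inl hrepos)
  have hargsin : Complex.arg (Complex.sin ((A:ℂ) + (X:ℂ)*Complex.I))
      = Real.arctan (Real.tanh X * Real.cot A) := by
    rw [arg_eq_arctan' hrepos, hsin, re_mk', im_mk']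
    congr 1
    rw [Real.tanh_eq_sinh_div_cosh, Real.cot_eq_cos_div_sin]
    have h1 : Real.cosh X ≠ 0 := (Real.cosh_pos X).ne'
    field_simp
  have h1 : Tendsto (fun n => Complex.arg (P n)) atTop
      (nhds (Complex.arg (Complex.sin ((A:ℂ) + (X:ℂ)*Complex.I)))) := by
    have h0 := (Complex.continuousAt_arg hslit).tendsto.comp heuler
    refine h0.congr fun n => ?_
    simp only [Function.comp, hPdef, hπζ]
  have h2 : Tendsto (fun n => Real.arctan (X/A) + ∑ k ∈ Finset.range n, g k) atTop
      (nhds (Real.arctan (X/A) + L)) :=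
    tendsto_const_nhds.add hL.tendsto_sum_nat
  have h3 : Tendsto (fun n => (Complex.arg (P n) : Real.Angle)) atTop
      (nhds ((Complex.arg (Complex.sin ((A:ℂ) + (X:ℂ)*Complex.I)) : ℝ) : Real.Angle)) :=
    (Real.Angle.continuous_coe.tendsto _).comp h1
  have h4 : Tendsto (fun n => (Complex.arg (P n) : Real.Angle)) atTop
      (nhds ((Real.arctan (X/A) + L : ℝ) : Real.Angle)) := by
    have h5 := (Real.Angle.continuous_coe.tendsto _).comp h2
    exact (h5.congr (fun n => (hargP n).symm))
  have h6 := tendsto_nhds_unique h3 h4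
  rw [Real.Angle.angle_eq_iff_two_pi_dvd_sub] at h6
  obtain ⟨m, hm⟩ := h6
  refine ⟨m, ?_⟩
  rw [← hargsin]
  exact_mod_cast hm


private lemma diff_arctan' {A X c : ℝ} (hA₀ : 0 < A) (hcA : A < c) :
    Real.arctan (X / (c + A)) - Real.arctan (X / (c - A))
      = Real.arctan (-(2 * A * X) / (c ^ 2 - A ^ 2 + X ^ 2)) := by
  have hplus : 0 < c + A := by linarith
  have hminus : 0 < c - A := by linarith
  have hden : 0 < c ^ 2 - A ^ 2 + X ^ 2 := by nlinarith
  have h1 : (X / (c + A)) * (-(X / (c - A))) = -(X ^ 2 / (c + A) / (c - A)) := by ring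
  have h2 : 0 ≤ X ^ 2 / (c + A) / (c - A) := by positivity
  have hxy : (X / (c + A)) * (-(X / (c - A))) < 1 := by rw [h1]; linarith
  rw [sub_eq_add_neg, ← Real.arctan_neg, Real.arctan_add hxy]
  congr 1
  rw [div_eq_div_iff]
  · field_simp
    ring
  · rw [h1]; linarith
  · linarith


private lemma abs_arctan_le' (x : ℝ) : |Real.arctan x| ≤ |x| := by
  wlog h : 0 ≤ x with H
  · push_neg at h
    have h2 := H (-x) (by linarith)
    rwa [Real.arctan_neg, abs_neg, abs_neg] at h2
  rcases eq_or_lt_of_le h with h0 | h0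
  · simp [← h0]
  · have h1 : 0 < Real.arctan x := by
      rw [← Real.arctan_zero]; exact Real.arctan_strictMono h0
    have h2 : Real.arctan x < Real.tan (Real.arctan x) :=
      Real.lt_tan h1 (Real.arctan_lt_pi_div_two x)
    rw [Real.tan_arctan] at h2
    rw [abs_of_pos h1, abs_of_pos h0]
    linarith

private lemma base_summable' : Summable (fun k : ℕ => 1 / ((k:ℝ)+1)^2) := by
  have h := (summable_one_div_nat_pow (p := 2)).mpr one_lt_two
  have h2 := (summable_nat_add_iff 1).mpr h
  refine h2.congr fun n => ?_
  push_cast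
  ring

private lemma g_bound' (A X : ℝ) (hA₀ : 0 < A) (hA₁ : A < π) (k : ℕ) :
    |Real.arctan (-(2*A*X) / ((((k:ℝ)+1)*π)^2 - A^2 + X^2))|
      ≤ 2*A*|X|/(π^2-A^2) * (1/((k:ℝ)+1)^2) := by
  have hπ : (0:ℝ) < π := Real.pi_pos
  have hk : (1 : ℝ) ≤ (k : ℝ) + 1 := by
    have : (0:ℝ) ≤ (k:ℝ) := Nat.cast_nonneg k
    linarith
  have hc1 : A < ((k:ℝ)+1)*π := by nlinarith
  have hden : 0 < (((k:ℝ)+1)*π)^2 - A^2 + X^2 := by nlinarith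
  have hden2 : 0 < (((k:ℝ)+1)*π)^2 - A^2 := by nlinarith
  have hπA : 0 < π^2 - A^2 := by nlinarith
  have h1 := abs_arctan_le' (-(2*A*X) / ((((k:ℝ)+1)*π)^2 - A^2 + X^2))
  have h2 : |(-(2*A*X)) / ((((k:ℝ)+1)*π)^2 - A^2 + X^2)|
      = 2*A*|X| / ((((k:ℝ)+1)*π)^2 - A^2 + X^2) := by
    rw [abs_div, abs_of_pos hden, abs_neg, abs_mul, abs_of_pos (by linarith : (0:ℝ) < 2*A)]
  rw [h2] at h1
  refine h1.trans ?_
  have h3 : 2*A*|X| / ((((k:ℝ)+1)*π)^2 - A^2 + X^2) ≤ 2*A*|X| / ((((k:ℝ)+1)*π)^2 - A^2) := by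
    gcongr <;> first
      | positivity
      | nlinarith [abs_nonneg X]
  refine h3.trans ?_
  have hk2 : (1:ℝ) ≤ ((k:ℝ)+1)^2 := by nlinarith
  have h4 : ((k:ℝ)+1)^2 * (π^2 - A^2) ≤ (((k:ℝ)+1)*π)^2 - A^2 := by nlinarith [sq_nonneg A]
  have h5 : 2*A*|X| / ((((k:ℝ)+1)*π)^2 - A^2) ≤ 2*A*|X| / (((k:ℝ)+1)^2 * (π^2 - A^2)) := by
    gcongr <;> positivity
  refine h5.trans_eq ?_
  rw [div_mul_div_comm, mul_one, mul_comm (π^2 - A^2)]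

private lemma summable_g' (A X : ℝ) (hA₀ : 0 < A) (hA₁ : A < π) :
    Summable (fun k : ℕ => Real.arctan (-(2*A*X) / ((((k:ℝ)+1)*π)^2 - A^2 + X^2))) := by
  apply Summable.of_abs
  exact Summable.of_nonneg_of_le (fun k => abs_nonneg _) (g_bound' A X hA₀ hA₁)
    (base_summable'.mul_left _)

private lemma hck' (A : ℝ) (hA₁ : A < π) (k : ℕ) : A < ((k:ℝ)+1)*π := by
  have hπ := Real.pi_pos
  have : (0:ℝ) ≤ (k:ℝ) := Nat.cast_nonneg k
  nlinarith

private lemma contL' (A : ℝ) (hA₀ : 0 < A) (hA₁ : A < π) :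
    Continuous (fun Y : ℝ => ∑' k : ℕ,
      (Real.arctan (Y / (((k:ℝ)+1)*π + A)) - Real.arctan (Y / (((k:ℝ)+1)*π - A)))) := by
  have hπA : 0 < π^2 - A^2 := by nlinarith [Real.pi_pos]
  rw [continuous_iff_continuousAt]
  intro x
  set R : ℝ := |x| + 1 with hR
  have hcont : ContinuousOn (fun Y : ℝ => ∑' k : ℕ,
      (Real.arctan (Y / (((k:ℝ)+1)*π + A)) - Real.arctan (Y / (((k:ℝ)+1)*π - A))))
      (Metric.closedBall x 1) := by
    refine continuousOn_tsum
      (f := fun (k:ℕ) (Y:ℝ) =>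
        Real.arctan (Y / (((k:ℝ)+1)*π + A)) - Real.arctan (Y / (((k:ℝ)+1)*π - A)))
      (u := fun k : ℕ => 2*A*R/(π^2-A^2) * (1/((k:ℝ)+1)^2))
      (fun k => ?_) (base_summable'.mul_left _) (fun k Y hY => ?_)
    · exact ((Real.continuous_arctan.comp (continuous_id.div_const _)).sub
        (Real.continuous_arctan.comp (continuous_id.div_const _))).continuousOn
    · have hYR : |Y| ≤ R := by
        rw [Metric.mem_closedBall, Real.dist_eq] at hY
        rw [hR]
        calc |Y| = |(Y - x) + x| := by ring_nf
        _ ≤ |Y - x| + |x| := abs_add_le _ _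
        _ ≤ R := by rw [hR]; linarith
      simp only [Real.norm_eq_abs]
      rw [diff_arctan' hA₀ (hck' A hA₁ k)]
      refine (g_bound' A Y hA₀ hA₁ k).trans ?_
      gcongr
  exact hcont.continuousAt (Metric.closedBall_mem_nhds x one_pos)

/-- Entry 11 of Ramanujan (corrected form): for real `X` and `0 < A < π`,
`arctan (tanh X · cot A) = arctan (X/A) + ∑_{k=1}^∞ (arctan (X/(kπ + A)) - arctan (X/(kπ - A)))`,
where the series converges.  The index `k : ℕ` corresponds to the original
index `k + 1`, and the sum of the series is expressed as the difference of the
two sides. -/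
theorem ramanujan_entry_eleven (X A : ℝ) (hA₀ : 0 < A) (hA₁ : A < Real.pi) :
    HasSum
      (fun k : ℕ =>
        Real.arctan (X / (((k : ℝ) + 1) * Real.pi + A)) -
          Real.arctan (X / (((k : ℝ) + 1) * Real.pi - A)))
      (Real.arctan (Real.tanh X * Real.cot A) - Real.arctan (X / A)) := by
  have hπ : (0:ℝ) < π := Real.pi_pos
  set F : ℕ → ℝ → ℝ := fun k Y =>
    Real.arctan (Y / (((k:ℝ)+1)*π + A)) - Real.arctan (Y / (((k:ℝ)+1)*π - A)) with hF
  have hFg : ∀ (Y : ℝ) (k : ℕ), F k Y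
      = Real.arctan (-(2*A*Y) / ((((k:ℝ)+1)*π)^2 - A^2 + Y^2)) := by
    intro Y k
    exact diff_arctan' hA₀ (hck' A hA₁ k)
  have hsum : ∀ Y : ℝ, Summable (fun k => F k Y) := by
    intro Y
    exact (summable_g' A Y hA₀ hA₁).congr fun k => (hFg Y k).symm
  set D : ℝ → ℝ := fun Y =>
    Real.arctan (Real.tanh Y * Real.cot A) - (Real.arctan (Y/A) + ∑' k, F k Y) with hD
  have hint : ∀ Y : ℝ, ∃ m : ℤ, D Y = 2 * π * m := by
    intro Y
    have h := (summable_g' A Y hA₀ hA₁).hasSum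
    obtain ⟨m, hm⟩ := key_angle' A hA₀ hA₁ Y h
    refine ⟨m, ?_⟩
    rw [hD]
    simp only []
    rw [show (∑' k, F k Y)
      = ∑' k : ℕ, Real.arctan (-(2*A*Y) / ((((k:ℝ)+1)*π)^2 - A^2 + Y^2))
      from tsum_congr (hFg Y)]
    exact hm
  have hD0 : D 0 = 0 := by
    rw [hD]
    have h1 : ∀ k : ℕ, F k 0 = 0 := by
      intro k
      rw [hF]
      simp
    simp [h1, Real.tanh_zero]
  have hDcont : Continuous D := by
    rw [hD]
    refine Continuous.sub ?_ (Continuous.add ?_ ?_)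
    · have htanh : Continuous Real.tanh := by
        have : Real.tanh = fun x => Real.sinh x / Real.cosh x :=
          funext fun x => Real.tanh_eq_sinh_div_cosh x
        rw [this]
        exact Real.continuous_sinh.div Real.continuous_cosh fun x => (Real.cosh_pos x).ne'
      exact Real.continuous_arctan.comp (htanh.mul continuous_const)
    · exact Real.continuous_arctan.comp (continuous_id.div_const _)
    · exact contL' A hA₀ hA₁
  have hzero : ∀ Y : ℝ, D Y = 0 := by
    intro Y
    obtain ⟨m, hm⟩ := hint Y
    rcases eq_or_ne m 0 with h0 | h0
    · rw [h0] at hm; simpa using hm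
    · exfalso
      have hm1 : (1:ℝ) ≤ |(m:ℝ)| := by
        rw [← Int.cast_abs]
        exact_mod_cast Int.one_le_abs (by exact_mod_cast h0)
      have habs : 2 * π ≤ |D Y| := by
        rw [hm, abs_mul, abs_of_pos (by linarith : (0:ℝ) < 2*π)]
        nlinarith
      set t : ℝ := if 0 < D Y then π else -π with ht
      have htmem : t ∈ Set.uIcc (D 0) (D Y) := by
        rw [hD0]
        rcases lt_or_ge 0 (D Y) with hpos | hneg
        · rw [ht, if_pos hpos]
          rw [Set.uIcc_of_le (by linarith [abs_of_pos hpos ▸ habs] : (0:ℝ) ≤ D Y)]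
          constructor
          · linarith
          · have : |D Y| = D Y := abs_of_pos hpos
            linarith [this ▸ habs]
        · have hneg' : D Y < 0 := by
            rcases lt_or_eq_of_le hneg with h | h
            · exact h
            · exfalso; rw [h] at habs; simp at habs; linarith
          rw [ht, if_neg (by linarith)]
          rw [Set.uIcc_of_ge (by linarith : D Y ≤ (0:ℝ))]
          constructor
          · have : |D Y| = -(D Y) := abs_of_neg hneg'
            linarith [this ▸ habs]
          · linarith
      obtain ⟨c, _, hc⟩ := intermediate_value_uIcc (hDcont.continuousOn) htmem
      obtain ⟨m', hm'⟩ := hint c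
      rw [hc] at hm'
      rcases lt_or_ge 0 (D Y) with hpos | hneg
      · rw [ht, if_pos hpos] at hm'
        have h2 : (2 * (m':ℝ)) = 1 := by
          have : π * (2 * (m':ℝ) - 1) = 0 := by linarith [hm']
          have h3 := mul_eq_zero.mp this
          rcases h3 with h3 | h3
          · exact absurd h3 hπ.ne'
          · linarith
        have : (2 * m' : ℤ) = 1 := by exact_mod_cast h2
        omega
      · rw [ht, if_neg (by linarith)] at hm'
        have h2 : (2 * (m':ℝ)) = -1 := by
          have : π * (2 * (m':ℝ) + 1) = 0 := by linarith [hm']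
          have h3 := mul_eq_zero.mp this
          rcases h3 with h3 | h3
          · exact absurd h3 hπ.ne'
          · linarith
        have : (2 * m' : ℤ) = -1 := by exact_mod_cast h2
        omega
  have hfin := (hsum X).hasSum
  have hzX := hzero X
  rw [hD] at hzX
  have : ∑' k, F k X = Real.arctan (Real.tanh X * Real.cot A) - Real.arctan (X / A) := by
    linarith
  rwa [this] at hfin
end

section
/- Let s be a complex number with Re(s) < 0 and let c be a positive real number. Then ∫_0^∞ t^{−s−1} e^{−ct} sin(t) dt = Γ(−s) · ( (c − i)^s − (c + i)^s ) / (2i), where the complex powers are principal (both c − i and c + i have positive real part) and Γ is the complex Gamma function; the integral converges absolutely. -/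
open MeasureTheory Set Complex Filter Metric

namespace I5kAux

set_option maxHeartbeats 1000000

/-- Measurability of the integrand. -/
lemma aemeas_aux (a z : ℂ) :
    AEStronglyMeasurable (fun t : ℝ => (t : ℂ) ^ (a - 1) * Complex.exp (-z * t))
      (volume.restrict (Ioi 0)) := by
  apply ContinuousOn.aestronglyMeasurable ?_ measurableSet_Ioi
  refine ContinuousOn.mul ?_ ?_
  · apply continuousOn_of_forall_continuousAt
    intro x hx
    exact (continuousAt_cpow_const <| ofReal_mem_slitPlane.2 hx).comp
      continuous_ofReal.continuousAt
  · apply Continuous.continuousOn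
    exact Complex.continuous_exp.comp (continuous_const.mul Complex.continuous_ofReal)

lemma real_integrable_aux {p b : ℝ} (hp : -1 < p) (hb : 0 < b) :
    IntegrableOn (fun t : ℝ => t ^ p * Real.exp (-b * t)) (Ioi 0) := by
  have := integrableOn_rpow_mul_exp_neg_mul_rpow (p := 1) (s := p) (b := b) hp zero_lt_one hb
  simpa [Real.rpow_one] using this

lemma integrable_aux {a : ℂ} (ha : 0 < a.re) {z : ℂ} (hz : 0 < z.re) :
    IntegrableOn (fun t : ℝ => (t : ℂ) ^ (a - 1) * Complex.exp (-z * t)) (Ioi 0) := by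
  refine ⟨aemeas_aux a z, ?_⟩
  rw [← hasFiniteIntegral_norm_iff]
  refine HasFiniteIntegral.congr (real_integrable_aux (p := a.re - 1) (by linarith) hz).2 ?_
  apply (ae_restrict_iff' measurableSet_Ioi).mpr
  filter_upwards with x hx
  rw [norm_mul,
    norm_cpow_eq_rpow_re_of_pos hx, Complex.norm_exp]
  simp [sub_re, neg_mul, neg_re, mul_comm]

/-- Differentiability in `z` of the parametric integral. -/
lemma hasDerivAt_aux {a : ℂ} (ha : 0 < a.re) {z₀ : ℂ} (hz₀ : 0 < z₀.re) :
    HasDerivAt (fun z : ℂ => ∫ t in Ioi (0:ℝ), (t : ℂ) ^ (a - 1) * Complex.exp (-z * t))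
      (∫ t in Ioi (0:ℝ), ((t : ℂ) ^ (a - 1) * Complex.exp (-z₀ * t)) * (-(t:ℂ))) z₀ := by
  set ε : ℝ := z₀.re / 2 with hε
  have hεpos : 0 < ε := by positivity
  have hmeasF : ∀ᶠ z in nhds z₀, AEStronglyMeasurable
      (fun t : ℝ => (t : ℂ) ^ (a - 1) * Complex.exp (-z * t)) (volume.restrict (Ioi 0)) :=
    Filter.Eventually.of_forall fun z => aemeas_aux a z
  have hmeasF' : AEStronglyMeasurable
      (fun t : ℝ => ((t : ℂ) ^ (a - 1) * Complex.exp (-z₀ * t)) * (-(t:ℂ)))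
      (volume.restrict (Ioi 0)) :=
    (aemeas_aux a z₀).mul (Complex.continuous_ofReal.neg.aestronglyMeasurable.restrict)
  have hbound : ∀ᵐ (t : ℝ) ∂(volume.restrict (Ioi (0:ℝ))), ∀ z ∈ ball z₀ ε,
      ‖((t : ℂ) ^ (a - 1) * Complex.exp (-z * t)) * (-(t:ℂ))‖
        ≤ t ^ a.re * Real.exp (-ε * t) := by
    apply (ae_restrict_iff' measurableSet_Ioi).mpr
    filter_upwards with t ht
    intro z hz
    have hzre : ε ≤ z.re := by
      have h1 : |z.re - z₀.re| ≤ dist z z₀ := by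
        rw [Complex.dist_eq]
        simpa using Complex.abs_re_le_norm (z - z₀)
      have h2 := abs_lt.mp (lt_of_le_of_lt h1 (mem_ball.mp hz))
      simp only [hε] at *
      linarith [h2.1]
    have h3 : ‖(-(t:ℂ))‖ = t := by
      rw [norm_neg, Complex.norm_real, Real.norm_eq_abs, abs_of_pos ht]
    rw [norm_mul, norm_mul, h3,
      norm_cpow_eq_rpow_re_of_pos ht, Complex.norm_exp]
    have h4 : (-z * (t:ℂ)).re = -(z.re * t) := by simp
    rw [h4, sub_re, one_re]
    have hb : Real.exp (-(z.re * t)) * t ≤ Real.exp (-ε * t) * t := by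
      apply mul_le_mul_of_nonneg_right _ ht.le
      apply Real.exp_le_exp.mpr
      nlinarith [mul_le_mul_of_nonneg_right hzre ht.le]
    calc t ^ (a.re - 1) * Real.exp (-(z.re * t)) * t
        = t ^ (a.re - 1) * (Real.exp (-(z.re * t)) * t) := by ring
      _ ≤ t ^ (a.re - 1) * (Real.exp (-ε * t) * t) :=
          mul_le_mul_of_nonneg_left hb (Real.rpow_nonneg ht.le _)
      _ = t ^ (a.re - 1) * t ^ (1:ℝ) * Real.exp (-ε * t) := by rw [Real.rpow_one]; ring
      _ = t ^ a.re * Real.exp (-ε * t) := by rw [← Real.rpow_add ht]; ring_nf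
  have hbd_int : Integrable (fun t : ℝ => t ^ a.re * Real.exp (-ε * t))
      (volume.restrict (Ioi 0)) := real_integrable_aux (by linarith) hεpos
  have hdiff : ∀ᵐ (t : ℝ) ∂(volume.restrict (Ioi (0:ℝ))), ∀ z ∈ ball z₀ ε,
      HasDerivAt (fun z : ℂ => (t : ℂ) ^ (a - 1) * Complex.exp (-z * t))
        (((t : ℂ) ^ (a - 1) * Complex.exp (-z * t)) * (-(t:ℂ))) z := by
    apply Filter.Eventually.of_forall
    intro t z _
    have h1 : HasDerivAt (fun z : ℂ => -z * (t:ℂ)) (-(t:ℂ)) z := by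
      simpa using ((hasDerivAt_id z).neg.mul_const (t:ℂ))
    have h2 := (h1.cexp).const_mul ((t:ℂ) ^ (a - 1))
    simpa [mul_assoc] using h2
  exact (hasDerivAt_integral_of_dominated_loc_of_deriv_le (ball_mem_nhds z₀ hεpos) hmeasF
    (integrable_aux ha hz₀) hmeasF' hbound hbd_int hdiff).2

/-- The main identity for complex coefficient. -/
lemma integral_cpow_mul_exp_neg_cmul {a : ℂ} (ha : 0 < a.re) {z : ℂ} (hz : 0 < z.re) :
    ∫ t in Ioi (0:ℝ), (t : ℂ) ^ (a - 1) * Complex.exp (-z * t)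
      = Complex.Gamma a * z ^ (-a) := by
  set U : Set ℂ := {w : ℂ | 0 < w.re} with hU
  have hUopen : IsOpen U := isOpen_lt continuous_const Complex.continuous_re
  have hUconn : IsPreconnected U := (convex_halfSpace_re_gt 0).isPreconnected
  set F : ℂ → ℂ := fun w => ∫ t in Ioi (0:ℝ), (t : ℂ) ^ (a - 1) * Complex.exp (-w * t) with hF
  set G : ℂ → ℂ := fun w => Complex.Gamma a * w ^ (-a) with hG
  have hFdiff : AnalyticOnNhd ℂ F U := by
    apply DifferentiableOn.analyticOnNhd _ hUopen
    intro w hw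
    exact ((hasDerivAt_aux ha hw).differentiableAt).differentiableWithinAt
  have hGdiff : AnalyticOnNhd ℂ G U := by
    apply DifferentiableOn.analyticOnNhd _ hUopen
    intro w hw
    apply DifferentiableAt.differentiableWithinAt
    exact ((differentiableAt_id.cpow (differentiableAt_const (-a)) (Or.inl hw))).const_mul _
  have hreal : ∀ r : ℝ, 0 < r → F r = G r := by
    intro r hr
    have h1 := Complex.integral_cpow_mul_exp_neg_mul_Ioi ha hr
    have harg : Complex.arg (r:ℂ) ≠ Real.pi := by
      rw [Complex.arg_ofReal_of_nonneg hr.le]; exact Real.pi_ne_zero.symm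
    have h2 : ((1:ℂ) / r) ^ a = (r : ℂ) ^ (-a) := by
      rw [one_div, inv_cpow _ _ harg, ← Complex.cpow_neg]
    rw [hF, hG]
    simp only
    calc (∫ t in Ioi (0:ℝ), (t : ℂ) ^ (a - 1) * Complex.exp (-(r:ℂ) * t))
        = (∫ t in Ioi (0:ℝ), (t : ℂ) ^ (a - 1) * Complex.exp (-((r:ℂ) * (t:ℂ)))) := by
          apply setIntegral_congr_fun measurableSet_Ioi
          intro x _
          norm_num
      _ = ((1:ℂ)/r) ^ a * Complex.Gamma a := h1
      _ = Complex.Gamma a * (r:ℂ) ^ (-a) := by rw [h2]; ring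
  have h1U : (1:ℂ) ∈ U := by simp [hU]
  have hfreq : ∃ᶠ w in nhdsWithin (1:ℂ) {(1:ℂ)}ᶜ, F w = G w := by
    have htend : Filter.Tendsto (fun n : ℕ => ((1 + 1/(n+1) : ℝ) : ℂ)) Filter.atTop
        (nhdsWithin (1:ℂ) {(1:ℂ)}ᶜ) := by
      apply tendsto_nhdsWithin_of_tendsto_nhds_of_eventually_within
      · have h5 : Filter.Tendsto (fun n : ℕ => (1 + 1/(n+1) : ℝ)) Filter.atTop (nhds 1) := by
          have := tendsto_one_div_add_atTop_nhds_zero_nat (𝕜 := ℝ)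
          simpa using (tendsto_const_nhds (x := (1:ℝ))).add this
        have := (Complex.continuous_ofReal.tendsto 1).comp h5
        simpa [Function.comp_def] using this
      · apply Filter.Eventually.of_forall
        intro n
        simp only [Set.mem_compl_iff, Set.mem_singleton_iff]
        intro h
        have h6 : (1 + 1/(n+1) : ℝ) = 1 := by exact_mod_cast h
        have hpos : (0:ℝ) < 1/(n+1) := by positivity
        linarith
    apply htend.frequently
    apply Filter.Frequently.of_forall
    intro n
    exact hreal _ (by positivity)
  exact hFdiff.eqOn_of_preconnected_of_frequently_eq hGdiff hUconn h1U hfreq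
    (show z ∈ U from hz)

end I5kAux

open MeasureTheory

/-- Evaluation of the integral `I₅ₖ`: for complex `s` with `Re s < 0` and a
positive real `c`,
`∫_0^∞ t^{-s-1} e^{-ct} sin t dt = Γ(-s) ((c - i)ˢ - (c + i)ˢ)/(2i)`,
where the complex powers are principal and `Γ` is the complex Gamma function;
the integral converges absolutely. -/
theorem integral_exp_sin_cpow (s : ℂ) (hs : s.re < 0) (c : ℝ) (hc : 0 < c) :
    (∫ t in Set.Ioi (0 : ℝ),
        (t : ℂ) ^ (-s - 1) * Complex.exp (-(c : ℂ) * t) * Complex.sin t) =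
        Complex.Gamma (-s) *
          (((c : ℂ) - Complex.I) ^ s - ((c : ℂ) + Complex.I) ^ s) / (2 * Complex.I) ∧
      IntegrableOn
        (fun t : ℝ => (t : ℂ) ^ (-s - 1) * Complex.exp (-(c : ℂ) * t) * Complex.sin t)
        (Set.Ioi 0) := by
  have ha : 0 < (-s).re := by simp only [Complex.neg_re]; linarith
  have hz₁ : 0 < ((c : ℂ) - Complex.I).re := by simp [hc]
  have hz₂ : 0 < ((c : ℂ) + Complex.I).re := by simp [hc]
  have hsa : (-s - 1 : ℂ) = (-s) - 1 := rfl
  have key : ∀ t : ℝ, (t : ℂ) ^ (-s - 1) * Complex.exp (-(c : ℂ) * t) * Complex.sin t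
      = ((t : ℂ) ^ (-s - 1) * Complex.exp (-((c : ℂ) - Complex.I) * t)
        - (t : ℂ) ^ (-s - 1) * Complex.exp (-((c : ℂ) + Complex.I) * t)) * (-Complex.I) / 2 := by
    intro t
    rw [Complex.sin]
    rw [show -((c : ℂ) - Complex.I) * t = -(c:ℂ)*t + (t:ℂ)*Complex.I by ring,
      show -((c : ℂ) + Complex.I) * t = -(c:ℂ)*t + (-(t:ℂ)*Complex.I) by ring,
      Complex.exp_add, Complex.exp_add]
    ring
  have hint₁ := I5kAux.integrable_aux ha hz₁
  have hint₂ := I5kAux.integrable_aux ha hz₂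
  rw [hsa]
  have hintegrable : IntegrableOn
      (fun t : ℝ => (t : ℂ) ^ (-s - 1) * Complex.exp (-(c : ℂ) * t) * Complex.sin t)
      (Set.Ioi 0) := by
    have h7 := ((hint₁.sub hint₂).mul_const (-Complex.I)).div_const 2
    apply h7.congr
    apply (ae_restrict_iff' measurableSet_Ioi).mpr
    filter_upwards with t ht
    simpa using (key t).symm
  refine ⟨?_, hintegrable⟩
  have hII : Complex.I * Complex.I = -1 := Complex.I_mul_I
  calc (∫ t in Set.Ioi (0 : ℝ),
        (t : ℂ) ^ ((-s) - 1) * Complex.exp (-(c : ℂ) * t) * Complex.sin t)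
      = ∫ t in Set.Ioi (0 : ℝ),
        ((t : ℂ) ^ ((-s) - 1) * Complex.exp (-((c : ℂ) - Complex.I) * t)
          - (t : ℂ) ^ ((-s) - 1) * Complex.exp (-((c : ℂ) + Complex.I) * t))
          * (-Complex.I) / 2 := by
        apply setIntegral_congr_fun measurableSet_Ioi
        intro t _
        exact key t
    _ = ((∫ t in Set.Ioi (0 : ℝ), (t : ℂ) ^ ((-s) - 1) * Complex.exp (-((c : ℂ) - Complex.I) * t))
        - ∫ t in Set.Ioi (0 : ℝ), (t : ℂ) ^ ((-s) - 1) * Complex.exp (-((c : ℂ) + Complex.I) * t))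
          * (-Complex.I) / 2 := by
        rw [← integral_sub hint₁ hint₂, ← integral_mul_const, ← integral_div]
    _ = (Complex.Gamma (-s) * ((c : ℂ) - Complex.I) ^ (-(-s))
        - Complex.Gamma (-s) * ((c : ℂ) + Complex.I) ^ (-(-s))) * (-Complex.I) / 2 := by
        rw [I5kAux.integral_cpow_mul_exp_neg_cmul ha hz₁,
          I5kAux.integral_cpow_mul_exp_neg_cmul ha hz₂]
    _ = Complex.Gamma (-s) *
          (((c : ℂ) - Complex.I) ^ s - ((c : ℂ) + Complex.I) ^ s) / (2 * Complex.I) := by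
        rw [neg_neg]
        rw [div_eq_div_iff (by norm_num) (by
          intro h
          have := mul_eq_zero.mp h
          rcases this with h | h
          · norm_num at h
          · exact Complex.I_ne_zero h)]
        ring_nf
        rw [Complex.I_sq]
        ring
end
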